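/- Let G = (V,E) be a connected, locally finite, infinite simple graph in which every vertex has degree at least 2, equipped with edge lengths ℓ : E → (0,∞) such that ℓ* := sup_{e∈E} ℓ(e) < ∞. Then α(G) = min{ 2/ℓ*, α_S(G) }, where α_S(G) := inf{ deg(∂G̃)/mes(G̃) : G̃ a finite star-like subgraph of G }. -/

import Mathlib

open scoped BigOperators

noncomputable section

variable {V : Type*}

/-- Total length of a set of edges. -/
def mes (ℓ : Sym2 V → ℝ) (E : Set (Sym2 V)) : ℝ := ∑ᶠ e ∈ E, ℓ e

/-- Weight `m(v)` of a vertex: total length of the edges incident to `v`. -/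
def mval (G : SimpleGraph V) (ℓ : Sym2 V → ℝ) (v : V) : ℝ := ∑ᶠ e ∈ G.incidenceSet v, ℓ e

/-- Characteristic value of an edge (tree case: no tile terms). -/
def cVal (G : SimpleGraph V) (ℓ : Sym2 V → ℝ) (e : Sym2 V) : ℝ :=
  1 / ℓ e - ∑ᶠ w ∈ {w : V | w ∈ e}, 1 / mval G ℓ w

/-- Boundary vertices of a subgraph. -/
def bdry (G : SimpleGraph V) (H : G.Subgraph) : Set V :=
  {v ∈ H.verts | (H.neighborSet v).ncard < (G.neighborSet v).ncard}

/-- Total (subgraph-)degree of the boundary of a subgraph. -/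
def degBdry (G : SimpleGraph V) (H : G.Subgraph) : ℝ :=
  ∑ᶠ v ∈ bdry G H, ((H.neighborSet v).ncard : ℝ)

/-- Isoperimetric constant of a metric graph. -/
def alpha (G : SimpleGraph V) (ℓ : Sym2 V → ℝ) : ℝ :=
  sInf {x | ∃ H : G.Subgraph, H.verts.Finite ∧ H.Connected ∧ H.edgeSet.Nonempty ∧
    x = degBdry G H / mes ℓ H.edgeSet}

/-- The star-like subgraph generated by a vertex set `U`: its edges are all the
edges of `G` incident to some vertex of `U`. -/
def starSubgraph (G : SimpleGraph V) (U : Set V) : G.Subgraph where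
  verts := U ∪ {w | ∃ u ∈ U, G.Adj u w}
  Adj u w := G.Adj u w ∧ (u ∈ U ∨ w ∈ U)
  adj_sub h := h.1
  edge_vert h := h.2.elim (fun h' => Or.inl h') (fun h' => Or.inr ⟨_, h', h.1.symm⟩)
  symm := ⟨fun u w h => ⟨h.1.symm, h.2.symm⟩⟩

section Aux
open Classical
variable (G : SimpleGraph V)

lemma edgeSet_finite_of_verts_finite (H : G.Subgraph) (hv : H.verts.Finite) :
    H.edgeSet.Finite := by
  have hsub : H.edgeSet ⊆ (fun p : V × V => s(p.1, p.2)) '' (H.verts ×ˢ H.verts) := by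
    intro e he
    induction e with
    | h a b => exact ⟨(a, b), ⟨H.edge_vert he, H.edge_vert (H.adj_symm he)⟩, rfl⟩
  exact ((hv.prod hv).image _).subset hsub

def intr (G : SimpleGraph V) (H : G.Subgraph) : Set V :=
  {v ∈ H.verts | H.neighborSet v = G.neighborSet v}

lemma mem_bdry_of_not_intr (hlf : ∀ v : V, (G.neighborSet v).Finite) {H : G.Subgraph} {v : V}
    (hv : v ∈ H.verts) (h : v ∉ intr G H) : v ∈ bdry G H := by
  refine ⟨hv, lt_of_le_of_ne (Set.ncard_le_ncard (H.neighborSet_subset v) (hlf v)) ?_⟩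
  intro heq
  exact h ⟨hv, Set.eq_of_subset_of_ncard_le (H.neighborSet_subset v) heq.ge (hlf v)⟩

lemma not_mem_bdry_of_intr {H : G.Subgraph} {v : V} (h : v ∈ intr G H) : v ∉ bdry G H :=
  fun hb => hb.2.ne (by rw [h.2])

def bcnt (B : Set V) (e : Sym2 V) : ℝ := (({v | v ∈ e} ∩ B).ncard : ℝ)

lemma deg_eq_card_incidence (H : G.Subgraph) (v : V) :
    (H.neighborSet v).ncard = {e ∈ H.edgeSet | v ∈ e}.ncard := by
  have himg : (fun w => s(v, w)) '' (H.neighborSet v) = {e ∈ H.edgeSet | v ∈ e} := by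
    ext e
    simp only [Set.mem_image, Set.mem_setOf_eq]
    constructor
    · rintro ⟨w, hw, rfl⟩
      exact ⟨hw, Sym2.mem_mk_left v w⟩
    · rintro ⟨he, hv⟩
      induction e with
      | h a b =>
        rcases Sym2.mem_iff.mp hv with rfl | rfl
        · exact ⟨b, he, rfl⟩
        · exact ⟨a, H.adj_symm he, Sym2.eq_swap⟩
  rw [← himg, Set.ncard_image_of_injective _ fun a b hab => (Sym2.congr_right).mp hab]

lemma degBdry_eq_sum_bcnt (hlf : ∀ v : V, (G.neighborSet v).Finite) (H : G.Subgraph)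
    (hv : H.verts.Finite) :
    degBdry G H = ∑ᶠ e ∈ H.edgeSet, bcnt (bdry G H) e := by
  have hB : (bdry G H).Finite := hv.subset fun v hb => hb.1
  have hE : H.edgeSet.Finite := edgeSet_finite_of_verts_finite G H hv
  rw [degBdry, finsum_mem_eq_finite_toFinset_sum _ hB, finsum_mem_eq_finite_toFinset_sum _ hE]
  have step1 : ∀ v : V, ((H.neighborSet v).ncard : ℝ) =
      ∑ e ∈ hE.toFinset, if v ∈ e then (1 : ℝ) else 0 := by
    intro v
    rw [deg_eq_card_incidence, Finset.sum_boole]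
    congr 1
    rw [← Set.ncard_coe_finset]
    congr 1
    ext e
    simp [Set.mem_setOf_eq, And.comm]
  calc ∑ v ∈ hB.toFinset, ((H.neighborSet v).ncard : ℝ)
      = ∑ v ∈ hB.toFinset, ∑ e ∈ hE.toFinset, if v ∈ e then (1 : ℝ) else 0 := by
        exact Finset.sum_congr rfl fun v _ => step1 v
    _ = ∑ e ∈ hE.toFinset, ∑ v ∈ hB.toFinset, if v ∈ e then (1 : ℝ) else 0 := Finset.sum_comm
    _ = ∑ e ∈ hE.toFinset, bcnt (bdry G H) e := by
        refine Finset.sum_congr rfl fun e _ => ?_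
        rw [Finset.sum_boole, bcnt]
        congr 1
        rw [← Set.ncard_coe_finset]
        congr 1
        ext w
        simp [Set.mem_setOf_eq, And.comm]

lemma bcnt_congr {B B' : Set V} {e : Sym2 V} (h : ∀ v ∈ e, (v ∈ B ↔ v ∈ B')) :
    bcnt B e = bcnt B' e := by
  unfold bcnt
  congr 2
  ext v
  simp only [Set.mem_inter_iff, Set.mem_setOf_eq]
  exact and_congr_right fun hv => h v hv

lemma bcnt_eq_two {B : Set V} {e : Sym2 V} (he : ¬ e.IsDiag) (h : ∀ v ∈ e, v ∈ B) :
    bcnt B e = 2 := by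
  induction e with
  | h a b =>
    have hab : a ≠ b := by simpa using he
    have : {v | v ∈ s(a, b)} ∩ B = {a, b} := by
      ext v
      simp only [Set.mem_inter_iff, Set.mem_setOf_eq, Sym2.mem_iff, Set.mem_insert_iff,
        Set.mem_singleton_iff]
      exact ⟨fun hh => hh.1, fun hh => ⟨hh, h v (Sym2.mem_iff.mpr hh)⟩⟩
    rw [bcnt, this, Set.ncard_pair hab]
    norm_num

lemma mes_union (ℓ : Sym2 V → ℝ) {A B : Set (Sym2 V)} (hd : Disjoint A B)
    (hA : A.Finite) (hB : B.Finite) : mes ℓ (A ∪ B) = mes ℓ A + mes ℓ B :=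
  finsum_mem_union hd hA hB

lemma mes_nonneg {G : SimpleGraph V} (ℓ : Sym2 V → ℝ) (hpos : ∀ e ∈ G.edgeSet, 0 < ℓ e)
    {E : Set (Sym2 V)} (hE : E.Finite) (hsub : E ⊆ G.edgeSet) : 0 ≤ mes ℓ E := by
  rw [mes, finsum_mem_eq_finite_toFinset_sum _ hE]
  exact Finset.sum_nonneg fun e he => (hpos e (hsub (hE.mem_toFinset.mp he))).le

lemma mes_pos {G : SimpleGraph V} (ℓ : Sym2 V → ℝ) (hpos : ∀ e ∈ G.edgeSet, 0 < ℓ e)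
    {E : Set (Sym2 V)} (hE : E.Finite) (hne : E.Nonempty) (hsub : E ⊆ G.edgeSet) :
    0 < mes ℓ E := by
  rw [mes, finsum_mem_eq_finite_toFinset_sum _ hE]
  refine Finset.sum_pos (fun e he => hpos e (hsub (hE.mem_toFinset.mp he))) ?_
  exact hE.toFinset_nonempty.mpr hne

lemma star_verts_finite (hlf : ∀ v : V, (G.neighborSet v).Finite) {U : Set V}
    (hU : U.Finite) : (starSubgraph G U).verts.Finite := by
  refine hU.union (Set.Finite.subset (hU.biUnion (fun u _ => hlf u)) ?_)
  rintro w ⟨u, hu, hadj⟩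
  exact Set.mem_biUnion hu (SimpleGraph.mem_neighborSet _ _ _ |>.mpr hadj)

lemma star_edge_nonempty (hdeg : ∀ v : V, 2 ≤ (G.neighborSet v).ncard) {U : Set V}
    (hU : U.Nonempty) : (starSubgraph G U).edgeSet.Nonempty := by
  obtain ⟨u, hu⟩ := hU
  have : (G.neighborSet u).Nonempty := by
    rw [Set.nonempty_iff_ne_empty]
    intro h
    have := hdeg u
    rw [h] at this
    simp at this
  obtain ⟨w, hw⟩ := this
  exact ⟨s(u, w), SimpleGraph.Subgraph.mem_edgeSet.mpr ⟨hw, Or.inl hu⟩⟩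

lemma mem_star_verts_left {U : Set V} {u : V} (hu : u ∈ U) : u ∈ (starSubgraph G U).verts :=
  Or.inl hu

lemma star_connected {U : Set V} (hUc : (G.induce U).Connected) :
    (starSubgraph G U).Connected := by
  set S := starSubgraph G U with hS
  have hreach : ∀ (x y : ↥U) (p : (G.induce U).Walk x y),
      S.coe.Reachable ⟨x.1, Or.inl x.2⟩ ⟨y.1, Or.inl y.2⟩ := by
    intro x y p
    induction p with
    | nil => exact SimpleGraph.Reachable.refl _
    | @cons a b c h p ih =>
      refine (SimpleGraph.Adj.reachable ?_).trans ih
      exact (SimpleGraph.Subgraph.coe_adj _ _ _).mpr ⟨h, Or.inl a.2⟩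
  have hUreach : ∀ (a b : V) (ha : a ∈ U) (hb : b ∈ U),
      S.coe.Reachable ⟨a, Or.inl ha⟩ ⟨b, Or.inl hb⟩ := by
    intro a b ha hb
    obtain ⟨p⟩ := hUc.preconnected ⟨a, ha⟩ ⟨b, hb⟩
    exact hreach _ _ p
  rw [SimpleGraph.Subgraph.connected_iff]
  constructor
  · constructor
    intro xx yy
    obtain ⟨w, hw⟩ := xx
    obtain ⟨w', hw'⟩ := yy
    have key : ∀ (w : V) (hw : w ∈ S.verts), ∃ (u : V) (hu : u ∈ U),
        S.coe.Reachable ⟨w, hw⟩ ⟨u, Or.inl hu⟩ := by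
      intro w hw
      rcases hw with hw | ⟨u, hu, hadj⟩
      · exact ⟨w, hw, SimpleGraph.Reachable.refl _⟩
      · refine ⟨u, hu, SimpleGraph.Adj.reachable ?_⟩
        exact (SimpleGraph.Subgraph.coe_adj _ _ _).mpr ⟨hadj.symm, Or.inr hu⟩
    obtain ⟨u, hu, h1⟩ := key w hw
    obtain ⟨u', hu', h2⟩ := key w' hw'
    exact (h1.trans (hUreach u u' hu hu')).trans h2.symm
  · obtain ⟨x⟩ := hUc.nonempty
    exact ⟨x.1, Or.inl x.2⟩

lemma key_ineq (hlf : ∀ v : V, (G.neighborSet v).Finite)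
    (hdeg : ∀ v : V, 2 ≤ (G.neighborSet v).ncard)
    (ℓ : Sym2 V → ℝ) (hpos : ∀ e ∈ G.edgeSet, 0 < ℓ e) {c : ℝ}
    (hcL : ∀ e ∈ G.edgeSet, c * ℓ e ≤ 2)
    (hcS : ∀ U : Set V, U.Finite → U.Nonempty → (G.induce U).Connected →
      c * mes ℓ (starSubgraph G U).edgeSet ≤ degBdry G (starSubgraph G U)) :
    ∀ (n : ℕ) (H : G.Subgraph), H.verts.Finite → (intr G H).ncard = n →
      c * mes ℓ H.edgeSet ≤ degBdry G H := by
  intro n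
  induction n using Nat.strong_induction_on with
  | _ n ih =>
  intro H hv hn
  have hE : H.edgeSet.Finite := edgeSet_finite_of_verts_finite G H hv
  have hIfin : (intr G H).Finite := hv.subset fun v hb => hb.1
  rcases Set.eq_empty_or_nonempty (intr G H) with hI | ⟨u, huI⟩
  · -- base case: no interior vertices
    rw [degBdry_eq_sum_bcnt G hlf H hv, mes,
      finsum_mem_eq_finite_toFinset_sum _ hE, finsum_mem_eq_finite_toFinset_sum _ hE,
      Finset.mul_sum]
    refine Finset.sum_le_sum fun e he => ?_
    have heH : e ∈ H.edgeSet := hE.mem_toFinset.mp he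
    have heG : e ∈ G.edgeSet := H.edgeSet_subset heH
    have h2 : bcnt (bdry G H) e = 2 := by
      refine bcnt_eq_two (G.not_isDiag_of_mem_edgeSet heG) ?_
      intro v hve
      refine mem_bdry_of_not_intr G hlf (SimpleGraph.Subgraph.mem_verts_of_mem_edge heH hve) ?_
      rw [hI]; exact fun h => h
    rw [h2]
    exact hcL e heG
  · -- inductive step: u is an interior vertex
    set I := intr G H with hIdef
    -- the graph of interior-interior edges
    set G' : SimpleGraph V :=
      { Adj := fun x y => G.Adj x y ∧ x ∈ I ∧ y ∈ I
        symm := ⟨fun x y h => ⟨h.1.symm, h.2.2, h.2.1⟩⟩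
        loopless := ⟨fun x h => G.irrefl h.1⟩ } with hG'
    have hG'walkI : ∀ {a b : V} (_ : G'.Walk a b), a ∈ I → b ∈ I := by
      intro a b p
      induction p with
      | nil => exact id
      | cons h p ih' => exact fun _ => ih' h.2.2
    set U : Set V := {w | G'.Reachable u w} with hU
    have hUu : u ∈ U := Set.mem_setOf_eq ▸ SimpleGraph.Reachable.refl u
    have hUI : U ⊆ I := by
      intro w hw
      obtain ⟨p⟩ := hw
      exact hG'walkI p huI
    have hclose : ∀ {x w : V}, x ∈ U → w ∈ I → G.Adj x w → w ∈ U := by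
      intro x w hx hw hadj
      exact (hx : G'.Reachable u x).trans (SimpleGraph.Adj.reachable ⟨hadj, hUI hx, hw⟩)
    have hUfin : U.Finite := hIfin.subset hUI
    have hUconn : (G.induce U).Connected := by
      have hwalk : ∀ {a b : V} (_ : G'.Walk a b) (ha : a ∈ U) (hb : b ∈ U),
          (G.induce U).Reachable ⟨a, ha⟩ ⟨b, hb⟩ := by
        intro a b p
        induction p with
        | nil => intro ha hb; rfl
        | @cons a x b h p ih' =>
          intro ha hb
          have hx : x ∈ U := (ha : G'.Reachable u a).trans (SimpleGraph.Adj.reachable h)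
          exact (SimpleGraph.Reachable.trans (SimpleGraph.Adj.reachable (by exact h.1)) (ih' hx hb))
      rw [SimpleGraph.connected_iff]
      refine ⟨?_, ⟨⟨u, hUu⟩⟩⟩
      rintro ⟨a, ha⟩ ⟨b, hb⟩
      obtain ⟨p⟩ := ((ha : G'.Reachable u a).symm.trans (hb : G'.Reachable u b))
      exact hwalk p ha hb
    set S : G.Subgraph := starSubgraph G U with hSdef
    have hadj_star : ∀ {a b : V}, S.Adj a b → H.Adj a b := by
      intro a b hab
      rcases hab.2 with ha | hb
      · have : b ∈ G.neighborSet a := hab.1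
        rw [← (hUI ha).2] at this
        exact this
      · have : a ∈ G.neighborSet b := hab.1.symm
        rw [← (hUI hb).2] at this
        exact this.symm
    set H' : G.Subgraph :=
      { verts := H.verts
        Adj := fun x y => H.Adj x y ∧ x ∉ U ∧ y ∉ U
        adj_sub := fun h => H.adj_sub h.1
        edge_vert := fun h => H.edge_vert h.1
        symm := ⟨fun x y h => ⟨h.1.symm, h.2.2, h.2.1⟩⟩ } with hH'
    have hpart : H.edgeSet = S.edgeSet ∪ H'.edgeSet := by
      ext e
      induction e with
      | h a b =>
        simp only [SimpleGraph.Subgraph.mem_edgeSet, Set.mem_union]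
        constructor
        · intro hab
          by_cases hab' : a ∈ U ∨ b ∈ U
          · exact Or.inl ⟨H.adj_sub hab, hab'⟩
          · push_neg at hab'
            exact Or.inr ⟨hab, hab'⟩
        · rintro (hab | hab)
          · exact hadj_star hab
          · exact hab.1
    have hdisj : Disjoint S.edgeSet H'.edgeSet := by
      rw [Set.disjoint_left]
      intro e he1 he2
      induction e with
      | h a b =>
        rw [SimpleGraph.Subgraph.mem_edgeSet] at he1 he2
        rcases he1.2 with h | h
        · exact he2.2.1 h
        · exact he2.2.2 h
    have hSE : S.edgeSet.Finite := hE.subset (hpart ▸ Set.subset_union_left)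
    have hH'E : H'.edgeSet.Finite := hE.subset (hpart ▸ Set.subset_union_right)
    have hSv : S.verts.Finite := star_verts_finite G hlf hUfin
    -- boundary status agreements
    have hbS : ∀ e ∈ S.edgeSet, ∀ v ∈ e, (v ∈ bdry G H ↔ v ∈ bdry G S) := by
      intro e he v hve
      by_cases hvU : v ∈ U
      · have h1 : v ∉ bdry G H := not_mem_bdry_of_intr G (hUI hvU)
        have h2 : v ∉ bdry G S := by
          refine not_mem_bdry_of_intr G ⟨Or.inl hvU, ?_⟩
          refine Set.Subset.antisymm (S.neighborSet_subset v) ?_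
          intro w hw
          exact ⟨hw, Or.inl hvU⟩
        simp [h1, h2]
      · have hvI : v ∉ I := by
          intro hvI
          -- v is adjacent to some vertex of U via e
          induction e with
          | h a b =>
            have hadj := (SimpleGraph.Subgraph.mem_edgeSet).mp he
            rcases Sym2.mem_iff.mp hve with rfl | rfl
            · rcases hadj.2 with h | h
              · exact hvU h
              · exact hvU (hclose h hvI hadj.1.symm)
            · rcases hadj.2 with h | h
              · exact hvU (hclose h hvI hadj.1)
              · exact hvU h
        have hvH : v ∈ H.verts :=
          SimpleGraph.Subgraph.mem_verts_of_mem_edge (hpart ▸ Set.mem_union_left _ he) hve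
        have h1 : v ∈ bdry G H := mem_bdry_of_not_intr G hlf hvH hvI
        have h2 : v ∈ bdry G S := by
          refine ⟨SimpleGraph.Subgraph.mem_verts_of_mem_edge he hve, ?_⟩
          calc (S.neighborSet v).ncard ≤ (H.neighborSet v).ncard :=
                Set.ncard_le_ncard (fun w hw => hadj_star hw) ((hlf v).subset (H.neighborSet_subset v))
            _ < (G.neighborSet v).ncard := h1.2
        simp [h1, h2]
    have hbH' : ∀ e ∈ H'.edgeSet, ∀ v ∈ e, (v ∈ bdry G H ↔ v ∈ bdry G H') := by
      intro e he v hve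
      have hvU : v ∉ U := by
        induction e with
        | h a b =>
          have hadj := (SimpleGraph.Subgraph.mem_edgeSet).mp he
          rcases Sym2.mem_iff.mp hve with rfl | rfl
          · exact hadj.2.1
          · exact hadj.2.2
      have hvH' : v ∈ H'.verts := SimpleGraph.Subgraph.mem_verts_of_mem_edge he hve
      have hvH : v ∈ H.verts := hvH'
      by_cases hvI : v ∈ I
      · have h1 : v ∉ bdry G H := not_mem_bdry_of_intr G hvI
        have h2 : v ∉ bdry G H' := by
          refine not_mem_bdry_of_intr G ⟨hvH', ?_⟩
          refine Set.Subset.antisymm (H'.neighborSet_subset v) ?_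
          intro w hw
          have hwU : w ∉ U := fun hwU => hvU (hclose hwU hvI (SimpleGraph.adj_symm G hw))
          have : w ∈ H.neighborSet v := by rw [hvI.2]; exact hw
          exact ⟨this, hvU, hwU⟩
        simp [h1, h2]
      · have h1 : v ∈ bdry G H := mem_bdry_of_not_intr G hlf hvH hvI
        have h2 : v ∈ bdry G H' := by
          refine ⟨hvH', ?_⟩
          calc (H'.neighborSet v).ncard ≤ (H.neighborSet v).ncard :=
                Set.ncard_le_ncard (fun w hw => hw.1) ((hlf v).subset (H.neighborSet_subset v))
            _ < (G.neighborSet v).ncard := h1.2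
        simp [h1, h2]
    -- decompositions
    have hmes : mes ℓ H.edgeSet = mes ℓ S.edgeSet + mes ℓ H'.edgeSet := by
      rw [hpart]; exact mes_union ℓ hdisj hSE hH'E
    have hdegB : degBdry G H = degBdry G S + degBdry G H' := by
      rw [degBdry_eq_sum_bcnt G hlf H hv, degBdry_eq_sum_bcnt G hlf S hSv,
        degBdry_eq_sum_bcnt G hlf H' hv, hpart, finsum_mem_union hdisj hSE hH'E]
      congr 1
      · exact finsum_mem_congr rfl fun e he => bcnt_congr fun v hve => hbS e he v hve
      · exact finsum_mem_congr rfl fun e he => bcnt_congr fun v hve => hbH' e he v hve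
    -- induction hypothesis applies to H'
    have hIH' : intr G H' ⊆ I \ {u} := by
      intro v hv'
      have hnb : H'.neighborSet v = G.neighborSet v := hv'.2
      have hvI : v ∈ I := by
        refine ⟨hv'.1, Set.Subset.antisymm (H.neighborSet_subset v) ?_⟩
        rw [← hnb]
        exact fun w hw => hw.1
      refine ⟨hvI, ?_⟩
      intro hvu
      rw [Set.mem_singleton_iff] at hvu
      subst hvu
      have : H'.neighborSet v = ∅ := by
        ext w
        simp only [Set.mem_empty_iff_false, iff_false]
        intro hw
        exact hw.2.1 hUu
      rw [this] at hnb
      have h2 := hdeg v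
      rw [← hnb] at h2
      simp at h2
    have hlt : (intr G H').ncard < n := by
      rw [← hn]
      refine Set.ncard_lt_ncard ?_ hIfin
      refine ssubset_of_subset_of_ssubset hIH' ?_
      exact Set.sdiff_singleton_ssubset.mpr huI
    have hind := ih _ hlt H' hv rfl
    have hstar := hcS U hUfin ⟨u, hUu⟩ hUconn
    rw [hmes, hdegB, mul_add]
    exact add_le_add hstar hind

lemma degBdry_nonneg (H : G.Subgraph) : 0 ≤ degBdry G H := by
  rw [degBdry, finsum_mem_def]
  exact finsum_nonneg fun v => Set.indicator_nonneg (fun _ _ => by positivity) v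

lemma induce_singleton_connected (v : V) : (G.induce {v}).Connected := by
  rw [SimpleGraph.connected_iff]
  refine ⟨?_, ⟨⟨v, rfl⟩⟩⟩
  rintro ⟨a, ha⟩ ⟨b, hb⟩
  rw [Set.mem_singleton_iff] at ha hb
  subst ha; subst hb
  rfl

lemma degBdry_subgraphOfAdj (hdeg : ∀ v : V, 2 ≤ (G.neighborSet v).ncard)
    {v w : V} (hvw : G.Adj v w) : degBdry G (G.subgraphOfAdj hvw) = 2 := by
  have hb : bdry G (G.subgraphOfAdj hvw) = {v, w} := by
    apply Set.Subset.antisymm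
    · exact fun x hx => hx.1
    · rintro x (rfl | rfl)
      · refine ⟨Or.inl rfl, ?_⟩
        rw [SimpleGraph.neighborSet_fst_subgraphOfAdj, Set.ncard_singleton]
        exact lt_of_lt_of_le one_lt_two (hdeg x)
      · refine ⟨Or.inr rfl, ?_⟩
        rw [SimpleGraph.neighborSet_snd_subgraphOfAdj, Set.ncard_singleton]
        exact lt_of_lt_of_le one_lt_two (hdeg x)
  rw [degBdry, hb, finsum_mem_pair hvw.ne, SimpleGraph.neighborSet_fst_subgraphOfAdj,
    SimpleGraph.neighborSet_snd_subgraphOfAdj, Set.ncard_singleton, Set.ncard_singleton]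
  norm_num

lemma single_edge_ratio_mem (hdeg : ∀ v : V, 2 ≤ (G.neighborSet v).ncard)
    (ℓ : Sym2 V → ℝ) {e : Sym2 V} (he : e ∈ G.edgeSet) :
    (2 : ℝ) / ℓ e ∈ {x | ∃ H : G.Subgraph, H.verts.Finite ∧ H.Connected ∧ H.edgeSet.Nonempty ∧
      x = degBdry G H / mes ℓ H.edgeSet} := by
  induction e with
  | h a b =>
    have hadj : G.Adj a b := he
    refine ⟨G.subgraphOfAdj hadj, ?_, SimpleGraph.Subgraph.subgraphOfAdj_connected hadj,
      ⟨s(a, b), by simp [SimpleGraph.edgeSet_subgraphOfAdj]⟩, ?_⟩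
    · simp only [SimpleGraph.subgraphOfAdj_verts]
      exact (Set.finite_singleton b).insert a
    · rw [degBdry_subgraphOfAdj G hdeg hadj, SimpleGraph.edgeSet_subgraphOfAdj, mes,
        finsum_mem_singleton]

end Aux

/-- For a connected, locally finite, infinite simple graph with all degrees
at least 2 and bounded edge lengths, the isoperimetric constant equals the minimum of
`2/ℓ*` and the infimum of the isoperimetric ratios over star-like subgraphs. -/
theorem statement_0 {V : Type*} [Infinite V] (G : SimpleGraph V)
    (hconn : G.Connected) (hlf : ∀ v : V, (G.neighborSet v).Finite)
    (hdeg : ∀ v : V, 2 ≤ (G.neighborSet v).ncard)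
    (ℓ : Sym2 V → ℝ) (hpos : ∀ e ∈ G.edgeSet, 0 < ℓ e)
    (hbdd : BddAbove (ℓ '' G.edgeSet)) :
    alpha G ℓ =
      min (2 / sSup (ℓ '' G.edgeSet))
        (sInf {x | ∃ U : Set V, U.Finite ∧ U.Nonempty ∧ (G.induce U).Connected ∧
          x = degBdry G (starSubgraph G U) / mes ℓ (starSubgraph G U).edgeSet}) := by
  classical
  set L := sSup (ℓ '' G.edgeSet) with hL
  set AS := {x | ∃ U : Set V, U.Finite ∧ U.Nonempty ∧ (G.induce U).Connected ∧
    x = degBdry G (starSubgraph G U) / mes ℓ (starSubgraph G U).edgeSet} with hAS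
  set A := {x | ∃ H : G.Subgraph, H.verts.Finite ∧ H.Connected ∧ H.edgeSet.Nonempty ∧
    x = degBdry G H / mes ℓ H.edgeSet} with hA
  have halpha : alpha G ℓ = sInf A := rfl
  obtain ⟨v₀⟩ : Nonempty V := inferInstance
  have hnb : (G.neighborSet v₀).Nonempty := by
    apply Set.nonempty_of_ncard_ne_zero
    have := hdeg v₀
    omega
  obtain ⟨w₀, hw₀⟩ := hnb
  have hedge : s(v₀, w₀) ∈ G.edgeSet := hw₀
  have hLpos : 0 < L :=
    lt_of_lt_of_le (hpos _ hedge) (le_csSup hbdd ⟨s(v₀, w₀), hedge, rfl⟩)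
  have hstarA : ∀ U : Set V, U.Finite → U.Nonempty → (G.induce U).Connected →
      degBdry G (starSubgraph G U) / mes ℓ (starSubgraph G U).edgeSet ∈ A := by
    intro U h1 h2 h3
    exact ⟨starSubgraph G U, star_verts_finite G hlf h1, star_connected G h3,
      star_edge_nonempty G hdeg h2, rfl⟩
  have hASsub : AS ⊆ A := by
    rintro x ⟨U, h1, h2, h3, rfl⟩
    exact hstarA U h1 h2 h3
  have hASne : AS.Nonempty :=
    ⟨_, ⟨{v₀}, Set.finite_singleton v₀, ⟨v₀, rfl⟩, induce_singleton_connected G v₀, rfl⟩⟩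
  have hAne : A.Nonempty := hASne.mono hASsub
  have hmemA : ∀ x ∈ A, (0 : ℝ) ≤ x := by
    rintro x ⟨H, h1, h2, h3, rfl⟩
    exact div_nonneg (degBdry_nonneg G H)
      (mes_nonneg ℓ hpos (edgeSet_finite_of_verts_finite G H h1) H.edgeSet_subset)
  have hAbdd : BddBelow A := ⟨0, hmemA⟩
  have hASbdd : BddBelow AS := ⟨0, fun x hx => hmemA x (hASsub hx)⟩
  have hle2 : alpha G ℓ ≤ sInf AS := csInf_le_csInf hAbdd hASne hASsub
  have hle1 : alpha G ℓ ≤ 2 / L := by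
    refine le_of_forall_sub_le ?_
    intro ε hε
    rw [sub_le_iff_le_add]
    set t : ℝ := 2 * L / (2 + ε * L) with ht
    have h2L : (0 : ℝ) < 2 + ε * L := by positivity
    have htpos : 0 < t := by positivity
    have htL : t < L := by
      rw [ht, div_lt_iff₀ h2L]
      nlinarith [mul_pos hε (mul_pos hLpos hLpos)]
    obtain ⟨x, ⟨e, he, rfl⟩, hx⟩ :=
      exists_lt_of_lt_csSup (Set.Nonempty.image ℓ ⟨s(v₀, w₀), hedge⟩) htL
    have hstep : alpha G ℓ ≤ 2 / ℓ e := csInf_le hAbdd (single_edge_ratio_mem G hdeg ℓ he)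
    refine hstep.trans ?_
    have hℓpos := hpos e he
    have h2t : 2 / ℓ e ≤ 2 / t := by
      apply div_le_div_of_nonneg_left (by norm_num) htpos hx.le
    refine h2t.trans ?_
    have h2teq : 2 / t = 2 / L + ε := by
      rw [ht, div_div_eq_mul_div]
      field_simp
    rw [h2teq]
  have hge : min (2 / L) (sInf AS) ≤ alpha G ℓ := by
    rw [halpha]
    refine le_csInf hAne ?_
    rintro x ⟨H, h1, h2, h3, rfl⟩
    have hEfin := edgeSet_finite_of_verts_finite G H h1
    have hm := mes_pos ℓ hpos hEfin h3 H.edgeSet_subset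
    rw [le_div_iff₀ hm]
    refine key_ineq G hlf hdeg ℓ hpos ?_ ?_ _ H h1 rfl
    · intro e he
      have h4 : ℓ e ≤ L := le_csSup hbdd ⟨e, he, rfl⟩
      have h5 := hpos e he
      calc min (2 / L) (sInf AS) * ℓ e ≤ (2 / L) * ℓ e :=
            mul_le_mul_of_nonneg_right (min_le_left _ _) h5.le
        _ ≤ (2 / L) * L := mul_le_mul_of_nonneg_left h4 (by positivity)
        _ = 2 := div_mul_cancel₀ 2 hLpos.ne'
    · intro U h1' h2' h3'
      have hfin' := edgeSet_finite_of_verts_finite G _ (star_verts_finite G hlf h1')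
      have hm' := mes_pos ℓ hpos hfin' (star_edge_nonempty G hdeg h2')
        (SimpleGraph.Subgraph.edgeSet_subset _)
      have hSle : sInf AS ≤ degBdry G (starSubgraph G U) / mes ℓ (starSubgraph G U).edgeSet :=
        csInf_le hASbdd ⟨U, h1', h2', h3', rfl⟩
      calc min (2 / L) (sInf AS) * mes ℓ (starSubgraph G U).edgeSet
          ≤ sInf AS * mes ℓ (starSubgraph G U).edgeSet :=
            mul_le_mul_of_nonneg_right (min_le_right _ _) hm'.le
        _ ≤ (degBdry G (starSubgraph G U) / mes ℓ (starSubgraph G U).edgeSet) *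
              mes ℓ (starSubgraph G U).edgeSet :=
            mul_le_mul_of_nonneg_right hSle hm'.le
        _ = degBdry G (starSubgraph G U) := div_mul_cancel₀ _ hm'.ne'
  exact le_antisymm (le_min hle1 hle2) hge
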